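/- For every H ⊆ [p]^n and i ∈ [n], the quantity avd'(H) = (1/|H|) Σ_{e ∈ E} (|e| − 1), summed over all edges e of the one-inclusion graph (including singleton edges), does not decrease under shifting: avd'(S_i(H)) ≥ avd'(H). -/

import Mathlib

open Finset

/-- The edge of the one-inclusion graph of `H ⊆ [p]^n` in direction `i` through `g`:
all members of `H` agreeing with `g` off coordinate `i`. -/
def edgeF {n p : ℕ} (H : Finset (Fin n → Fin p)) (i : Fin n) (g : Fin n → Fin p) :
    Finset (Fin n → Fin p) :=
  H.filter (fun h => ∀ j, j ≠ i → h j = g j)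

/-- The shifting operator in direction `i`: each edge is pushed downward, i.e. replaced by
the words agreeing with its pattern off `i` whose `i`-th coordinate is among the
`|e|` smallest values. -/
def shift {n p : ℕ} (i : Fin n) (H : Finset (Fin n → Fin p)) : Finset (Fin n → Fin p) :=
  Finset.univ.filter (fun g => (g i).val < (edgeF H i g).card)

/-- The projection of `H` to a sequence `S` of coordinates. -/
def projF {n p k : ℕ} (H : Finset (Fin n → Fin p)) (S : Fin k → Fin n) :
    Finset (Fin k → Fin p) :=
  H.image (fun h => fun j => h (S j))

/-- `H` E-shatters size `k` if some sequence of `k` coordinates has projection of size `≥ 2^k`. -/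
def EShatters {n p : ℕ} (H : Finset (Fin n → Fin p)) (k : ℕ) : Prop :=
  ∃ S : Fin k → Fin n, 2 ^ k ≤ (projF H S).card

/-- The exponential dimension: the largest `k` that `H` E-shatters. -/
noncomputable def dE {n p : ℕ} (H : Finset (Fin n → Fin p)) : ℕ :=
  sSup {k | EShatters H k}

/-- The number of edges of the one-inclusion graph of `H` in direction `j`
(equivalently, the number of distinct patterns of `H` off coordinate `j`). -/
def numEdges {n p : ℕ} (H : Finset (Fin n → Fin p)) (j : Fin n) : ℕ :=
  (H.image (fun h => fun k : {k : Fin n // k ≠ j} => h k.1)).card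

/-- `avd'(H) = (1/|H|) Σ_{e ∈ E} (|e| − 1)`, over all edges including singletons. -/
def avd' {n p : ℕ} (H : Finset (Fin n → Fin p)) : ℚ :=
  (∑ j : Fin n, ((H.card : ℚ) - (numEdges H j : ℚ))) / (H.card : ℚ)

/-- The degree of `v`: the number of non-singleton edges of the one-inclusion graph
containing `v`. -/
def deg {n p : ℕ} (H : Finset (Fin n → Fin p)) (v : Fin n → Fin p) : ℕ :=
  (Finset.univ.filter (fun j : Fin n => 2 ≤ (edgeF H j v).card)).card

/-- The average degree of the one-inclusion graph of `H`. -/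
def avd {n p : ℕ} (H : Finset (Fin n → Fin p)) : ℚ :=
  (∑ v ∈ H, (deg H v : ℚ)) / (H.card : ℚ)

section helpers
variable {p : ℕ} {α : Type*} [DecidableEq α]

def resOff (i : α) (g : α → Fin p) : {k : α // k ≠ i} → Fin p := fun k => g k.1

def extF (i : α) (f : {k : α // k ≠ i} → Fin p) (a : Fin p) : α → Fin p :=
  fun k => if h : k = i then a else f ⟨k, h⟩

lemma resOff_extF (i : α) (f : {k : α // k ≠ i} → Fin p) (a : Fin p) :
    resOff i (extF i f a) = f := by
  funext k; simp [resOff, extF, k.2]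

lemma extF_self (i : α) (f : {k : α // k ≠ i} → Fin p) (a : Fin p) : extF i f a i = a := by
  simp [extF]

lemma eq_of_resOff {i : α} {g g' : α → Fin p} (h1 : resOff i g = resOff i g')
    (h2 : g i = g' i) : g = g' := by
  funext k
  by_cases hk : k = i
  · subst hk; exact h2
  · exact congrFun h1 ⟨k, hk⟩

lemma extF_resOff (i : α) (g : α → Fin p) : extF i (resOff i g) (g i) = g := by
  funext k; by_cases hk : k = i <;> simp [extF, hk, resOff]

lemma card_filter_resOff_le [Fintype α] (A : Finset (α → Fin p)) (i : α)
    (f : {k : α // k ≠ i} → Fin p) :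
    (A.filter (fun g => resOff i g = f)).card ≤ p := by
  have h := Finset.card_le_card_of_injOn (s := A.filter (fun g => resOff i g = f))
      (t := (univ : Finset (Fin p))) (fun g => g i) (fun g _ => Finset.mem_univ (g i)) ?_
  · simpa using h
  · intro g hg g' hg' hgg
    simp only [coe_filter, Set.mem_setOf_eq] at hg hg'
    exact eq_of_resOff (hg.2.trans hg'.2.symm) hgg

lemma card_filter_val_lt {p c : ℕ} (h : c ≤ p) :
    ((univ : Finset (Fin p)).filter (fun a => a.val < c)).card = c := by
  have himg : ((univ : Finset (Fin p)).filter (fun a => a.val < c)).image Fin.val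
      = Finset.range c := by
    ext m
    simp only [mem_image, mem_filter, mem_univ, true_and, mem_range]
    constructor
    · rintro ⟨a, ha, rfl⟩; exact ha
    · intro hm; exact ⟨⟨m, lt_of_lt_of_le hm h⟩, hm, rfl⟩
  rw [← Finset.card_image_of_injective _ Fin.val_injective, himg, Finset.card_range]

end helpers

lemma edgeF_eq {n p : ℕ} (H : Finset (Fin n → Fin p)) (i : Fin n) (g : Fin n → Fin p) :
    edgeF H i g = H.filter (fun h => resOff i h = resOff i g) := by
  apply Finset.filter_congr
  intro h _
  constructor
  · intro hh; funext k; exact hh k.1 k.2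
  · intro hh j hj; exact congrFun hh ⟨j, hj⟩

lemma mem_shift {n p : ℕ} {H : Finset (Fin n → Fin p)} {i : Fin n} {g : Fin n → Fin p} :
    g ∈ shift i H ↔ (g i).val < (H.filter (fun h => resOff i h = resOff i g)).card := by
  rw [shift, mem_filter, edgeF_eq]
  simp

lemma card_shiftFiber {n p : ℕ} (H : Finset (Fin n → Fin p)) (i : Fin n)
    (f : {k : Fin n // k ≠ i} → Fin p) :
    ((shift i H).filter (fun g => resOff i g = f)).card
      = (H.filter (fun g => resOff i g = f)).card := by
  set c := (H.filter (fun g => resOff i g = f)).card with hc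
  have hset : (shift i H).filter (fun g => resOff i g = f)
      = univ.filter (fun g : Fin n → Fin p => resOff i g = f ∧ (g i).val < c) := by
    ext g
    rw [mem_filter, mem_shift, mem_filter]
    simp only [mem_univ, true_and]
    constructor
    · rintro ⟨hg, hf⟩
      exact ⟨hf, by rwa [hf] at hg⟩
    · rintro ⟨hf, hlt⟩
      exact ⟨by rwa [hf], hf⟩
  rw [hset]
  have hcard : (univ.filter (fun g : Fin n → Fin p => resOff i g = f ∧ (g i).val < c)).card
      = ((univ : Finset (Fin p)).filter (fun a => a.val < c)).card := by
    apply Finset.card_bij' (fun g _ => g i) (fun a _ => extF i f a)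
    · intro g hg
      simp only [mem_filter, mem_univ, true_and] at hg ⊢
      exact hg.2
    · intro a ha
      simp only [mem_filter, mem_univ, true_and] at ha ⊢
      exact ⟨resOff_extF i f a, by rwa [extF_self]⟩
    · intro g hg
      simp only [mem_filter, mem_univ, true_and] at hg
      rw [← hg.1]; exact extF_resOff i g
    · intro a _; exact extF_self i f a
  rw [hcard, card_filter_val_lt (hc ▸ card_filter_resOff_le H i f)]

lemma card_shift {n p : ℕ} (H : Finset (Fin n → Fin p)) (i : Fin n) :
    (shift i H).card = H.card := by
  rw [Finset.card_eq_sum_card_fiberwise (f := resOff i) (t := univ)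
      (fun x _ => mem_univ _),
    Finset.card_eq_sum_card_fiberwise (s := H) (f := resOff i) (t := univ)
      (fun x _ => mem_univ _)]
  exact Finset.sum_congr rfl (fun f _ => card_shiftFiber H i f)

lemma numEdges_eq {n p : ℕ} (H : Finset (Fin n → Fin p)) (j : Fin n) :
    numEdges H j = (H.image (resOff j)).card := rfl

lemma numEdges_shift_self {n p : ℕ} (H : Finset (Fin n → Fin p)) (i : Fin n) :
    numEdges (shift i H) i = numEdges H i := by
  rw [numEdges_eq, numEdges_eq]
  congr 1
  ext f
  have h1 : ∀ (A : Finset (Fin n → Fin p)),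
      f ∈ A.image (resOff i) ↔ 0 < (A.filter (fun g => resOff i g = f)).card := by
    intro A
    rw [Finset.card_pos, Finset.filter_nonempty_iff, Finset.mem_image]
  rw [h1, h1, card_shiftFiber]

lemma numEdges_shift_le {n p : ℕ} (H : Finset (Fin n → Fin p)) (i j : Fin n) :
    numEdges (shift i H) j ≤ numEdges H j := by
  by_cases hij : j = i
  · subst hij; exact (numEdges_shift_self H j).le
  have hi : (i : Fin n) ≠ j := fun h => hij h.symm
  set ι : {k : Fin n // k ≠ j} := ⟨i, hi⟩ with hι
  have key : ∀ g g' : Fin n → Fin p,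
      resOff i g' = resOff i g ↔
        (resOff ι (resOff j g') = resOff ι (resOff j g) ∧ g' j = g j) := by
    intro g g'
    constructor
    · intro e
      refine ⟨?_, congrFun e ⟨j, hij⟩⟩
      funext k
      have hk : k.1.1 ≠ i := fun hh => k.2 (Subtype.ext hh)
      exact congrFun e ⟨k.1.1, hk⟩
    · rintro ⟨e1, e2⟩
      funext k
      by_cases hkj : k.1 = j
      · show g' k.1 = g k.1
        rw [hkj]; exact e2
      · have hkι : (⟨k.1, hkj⟩ : {k : Fin n // k ≠ j}) ≠ ι := by
          intro hh; exact k.2 (congrArg Subtype.val hh)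
        exact congrFun e1 ⟨⟨k.1, hkj⟩, hkι⟩
  rw [numEdges_eq, numEdges_eq]
  rw [Finset.card_eq_sum_card_fiberwise (s := (shift i H).image (resOff j)) (f := resOff ι)
      (t := univ) (fun x _ => mem_univ _),
    Finset.card_eq_sum_card_fiberwise (s := H.image (resOff j)) (f := resOff ι)
      (t := univ) (fun x _ => mem_univ _)]
  apply Finset.sum_le_sum
  intro h _
  set c : Fin p → ℕ := fun b =>
    (H.filter (fun g => resOff ι (resOff j g) = h ∧ g j = b)).card with hcdef
  set m : ℕ := (univ : Finset (Fin p)).sup c with hm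
  have hcards : ∀ B : Finset (Fin n → Fin p),
      ((B.image (resOff j)).filter (fun f => resOff ι f = h)).card
        = (((B.image (resOff j)).filter (fun f => resOff ι f = h)).image
            (fun f => f ι)).card := by
    intro B
    refine (Finset.card_image_of_injOn ?_).symm
    intro f hf f' hf' he
    simp only [coe_filter, Set.mem_setOf_eq] at hf hf'
    exact eq_of_resOff (hf.2.trans hf'.2.symm) he
  rw [hcards, hcards]
  have memS : ∀ (B : Finset (Fin n → Fin p)) (a : Fin p),
      a ∈ ((B.image (resOff j)).filter (fun f => resOff ι f = h)).image (fun f => f ι)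
        ↔ ∃ g ∈ B, resOff ι (resOff j g) = h ∧ g i = a := by
    intro B a
    simp only [mem_image, mem_filter]
    constructor
    · rintro ⟨f, ⟨⟨g, hg, rfl⟩, hf⟩, rfl⟩
      exact ⟨g, hg, hf, rfl⟩
    · rintro ⟨g, hg, h1, h2⟩
      exact ⟨resOff j g, ⟨⟨g, hg, rfl⟩, h1⟩, h2⟩
  have hmS : m ≤ (((H.image (resOff j)).filter (fun f => resOff ι f = h)).image
      (fun f => f ι)).card := by
    apply Finset.sup_le
    intro b _
    apply Finset.card_le_card_of_injOn (fun g => g i)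
    · intro g hg
      simp only [mem_coe, mem_filter] at hg
      exact (memS H (g i)).2 ⟨g, hg.1, hg.2.1, rfl⟩
    · intro g hg g' hg' he
      simp only [coe_filter, Set.mem_setOf_eq] at hg hg'
      have e := (key g' g).2 ⟨hg.2.1.trans hg'.2.1.symm, hg.2.2.trans hg'.2.2.symm⟩
      exact eq_of_resOff e he
  have hS' : ∀ a ∈ (((shift i H).image (resOff j)).filter (fun f => resOff ι f = h)).image
      (fun f => f ι), a.val < m := by
    intro a ha
    obtain ⟨g, hg, h1, rfl⟩ := (memS (shift i H) a).1 ha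
    have hlt := mem_shift.1 hg
    have hfe : H.filter (fun g' => resOff i g' = resOff i g)
        = H.filter (fun g' => resOff ι (resOff j g') = h ∧ g' j = g j) := by
      apply Finset.filter_congr
      intro x _
      rw [key g x]
      constructor
      · rintro ⟨e1, e2⟩; exact ⟨e1.trans h1, e2⟩
      · rintro ⟨e1, e2⟩; exact ⟨e1.trans h1.symm, e2⟩
    rw [hfe] at hlt
    have hle : c (g j) ≤ m := Finset.le_sup (mem_univ (g j))
    exact lt_of_lt_of_le hlt hle
  have h1 : ((((shift i H).image (resOff j)).filter (fun f => resOff ι f = h)).image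
      (fun f => f ι)).card ≤ m := by
    have h2 := Finset.card_le_card_of_injOn (t := Finset.range m) Fin.val
      (fun a ha => mem_range.2 (hS' a ha)) (fun a _ a' _ e => Fin.val_injective e)
    simpa using h2
  exact h1.trans hmS

/-- The quantity `avd'` does not decrease under shifting. -/
theorem avd'_le_avd'_shift {n p : ℕ} (H : Finset (Fin n → Fin p)) (i : Fin n) :
    avd' H ≤ avd' (shift i H) := by
  rw [avd', avd', card_shift]
  rcases eq_or_ne H.card 0 with h0 | h0
  · rw [h0]; norm_num
  · have hpos : (0:ℚ) < (H.card : ℚ) := by exact_mod_cast Nat.pos_of_ne_zero h0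
    gcongr with j _
    exact numEdges_shift_le H i j
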